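/- For every q with 0 < q < 1, every integer n ≥ 2, every integer m ≥ 0 and every x ∈ [0,1]: L_{n,q}(t^{m+1},x) = L_{n,q}(t^m,x) + (1−x) · [ (1 − ([n−1]_q/[n]_q)^m) · R_{∞,q}(t^m, v(q,x)) − ([n−1]_q/[n]_q)^m · L_{n−1,q}(t^m, v(q,x)) ], where t^m denotes the monomial function t ↦ t^m on [0,1]. -/

import Mathlib

open Finset Filter

noncomputable section

/-- The q-integer `[n]_q = 1 + q + ⋯ + q^(n-1)`. -/
def qInt (q : ℝ) (n : ℕ) : ℝ := ∑ i ∈ Finset.range n, q ^ i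

/-- The q-factorial `[n]_q!`. -/
def qFact (q : ℝ) : ℕ → ℝ
  | 0 => 1
  | n + 1 => qFact q n * qInt q (n + 1)

/-- The q-binomial coefficient `[n k]_q`. -/
def qBinom (q : ℝ) (n k : ℕ) : ℝ := qFact q n / (qFact q k * qFact q (n - k))

/-- The Lupaş basis function `b_{nk}(q;x)`. -/
def lupasB (q : ℝ) (n k : ℕ) (x : ℝ) : ℝ :=
  qBinom q n k * q ^ (k * (k - 1) / 2) * x ^ k * (1 - x) ^ (n - k) /
    ∏ j ∈ Finset.range (n - 1), (1 - x + q ^ (j + 1) * x)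

/-- The limit Lupaş basis function `b_{∞k}(q;x)` (for `0 < q < 1`, `x ∈ [0,1)`). -/
def lupasBInf (q : ℝ) (k : ℕ) (x : ℝ) : ℝ :=
  q ^ (k * (k - 1) / 2) * (x / (1 - x)) ^ k /
    ((1 - q) ^ k * qFact q k * ∏' j : ℕ, (1 + q ^ j * (x / (1 - x))))

/-- The Lupaş q-analogue of the Bernstein operator `R_{n,q}(f,x)`. -/
def lupasR (q : ℝ) (n : ℕ) (f : ℝ → ℝ) (x : ℝ) : ℝ :=
  ∑ k ∈ Finset.range (n + 1), f (qInt q k / qInt q n) * lupasB q n k x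

/-- The limit q-Lupaş operator `R_{∞,q}(f,x)` for `0 < q < 1`. -/
def lupasRInfLow (q : ℝ) (f : ℝ → ℝ) (x : ℝ) : ℝ :=
  if x = 1 then f 1 else ∑' k : ℕ, f (1 - q ^ k) * lupasBInf q k x

/-- The limit q-Lupaş operator `R_{∞,q}(f,x)`: for `q > 1` it is defined by
reflection, `R_{∞,q}(f,x) = R_{∞,1/q}(g,1-x)` with `g(x) = f(1-x)`. -/
def lupasRInf (q : ℝ) (f : ℝ → ℝ) (x : ℝ) : ℝ :=
  if 1 < q then lupasRInfLow (1 / q) (fun t => f (1 - t)) (1 - x)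
  else lupasRInfLow q f x

/-- The transform `v(q,x) = qx/(1-x+qx)`. -/
def vq (q x : ℝ) : ℝ := q * x / (1 - x + q * x)

/-- `L_{n,q}(f,x) = R_{n,q}(f,x) - R_{∞,q}(f,x)`. -/
def lupasL (q : ℝ) (n : ℕ) (f : ℝ → ℝ) (x : ℝ) : ℝ :=
  lupasR q n f x - lupasRInf q f x

/-- The modulus of continuity `ω(f,t)` of `f` on `[0,1]`. -/
def omega1 (f : ℝ → ℝ) (t : ℝ) : ℝ :=
  sSup {d | ∃ x ∈ Set.Icc (0:ℝ) 1, ∃ y ∈ Set.Icc (0:ℝ) 1, |x - y| ≤ t ∧ d = |f x - f y|}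

/-- The second modulus of smoothness `ω₂(f,t)` of `f` on `[0,1]`. -/
def omega2 (f : ℝ → ℝ) (t : ℝ) : ℝ :=
  sSup {d | ∃ h, 0 ≤ h ∧ h ≤ t ∧ ∃ x, 0 ≤ x ∧ x ≤ 1 - 2 * h ∧
    d = |f (x + 2 * h) - 2 * f (x + h) + f x|}
section LupasAux

lemma qInt_pos {q : ℝ} (hq : 0 < q) {n : ℕ} (hn : 0 < n) : 0 < qInt q n := by
  unfold qInt
  exact Finset.sum_pos (fun i _ => pow_pos hq i) (Finset.nonempty_range_iff.mpr hn.ne')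

lemma qInt_zero {q : ℝ} : qInt q 0 = 0 := by simp [qInt]

lemma qInt_one {q : ℝ} : qInt q 1 = 1 := by simp [qInt]

lemma one_le_qInt {q : ℝ} (hq : 0 < q) {n : ℕ} (hn : 0 < n) : 1 ≤ qInt q n := by
  unfold qInt
  obtain ⟨r, rfl⟩ := Nat.exists_eq_add_of_le hn
  rw [Finset.sum_range_add]
  have : (0:ℝ) ≤ ∑ i ∈ Finset.range r, q ^ (1 + i) :=
    Finset.sum_nonneg fun i _ => (pow_pos hq _).le
  simp only [Finset.sum_range_one, pow_zero]
  linarith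

lemma qFact_pos {q : ℝ} (hq : 0 < q) : ∀ n, 0 < qFact q n
  | 0 => one_pos
  | n + 1 => mul_pos (qFact_pos hq n) (qInt_pos hq n.succ_pos)

lemma qInt_split {q : ℝ} {n k : ℕ} (hk : k ≤ n) :
    qInt q n = qInt q k + q ^ k * qInt q (n - k) := by
  obtain ⟨d, rfl⟩ := Nat.exists_eq_add_of_le hk
  rw [Nat.add_sub_cancel_left]
  unfold qInt
  rw [Finset.sum_range_add, Finset.mul_sum]
  congr 1
  exact Finset.sum_congr rfl fun i _ => (pow_add q k i)

lemma factor_pos {x : ℝ} (hx0 : 0 ≤ x) (hx1 : x ≤ 1) {c : ℝ} (hc : 0 < c) :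
    0 < 1 - x + c * x := by
  rcases lt_or_ge x 1 with h | h
  · nlinarith [mul_nonneg hc.le hx0]
  · have hx : x = 1 := le_antisymm hx1 h
    subst hx; nlinarith

lemma s_pos {q x : ℝ} (hq : 0 < q) (hx0 : 0 ≤ x) (hx1 : x ≤ 1) : 0 < 1 - x + q * x :=
  factor_pos hx0 hx1 hq

lemma prod2_pos {q x : ℝ} (hq : 0 < q) (hx0 : 0 ≤ x) (hx1 : x ≤ 1) (r : ℕ) :
    0 < ∏ j ∈ Finset.range r, (1 - x + q ^ (j + 2) * x) :=
  Finset.prod_pos fun j _ => factor_pos hx0 hx1 (pow_pos hq (j + 2))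

lemma prod_shift {q x : ℝ} {n : ℕ} (hn : 2 ≤ n) :
    ∏ j ∈ Finset.range (n - 1), (1 - x + q ^ (j + 1) * x)
      = (1 - x + q * x) * ∏ j ∈ Finset.range (n - 2), (1 - x + q ^ (j + 2) * x) := by
  have h : n - 1 = (n - 2) + 1 := by omega
  rw [h, Finset.prod_range_succ']
  rw [mul_comm]
  norm_num

set_option maxHeartbeats 1000000 in
/-- The crucial basis-function identity. -/
lemma bterm {q x : ℝ} (hq : 0 < q) (hx0 : 0 ≤ x) (hx1 : x ≤ 1) {n k : ℕ}
    (hn : 2 ≤ n) (hk : k ≤ n - 1) :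
    q ^ k * qInt q (n - k) * lupasB q n k x
      = qInt q n * ((1 - x) * lupasB q (n - 1) k (vq q x)) := by
  have hs : 0 < 1 - x + q * x := s_pos hq hx0 hx1
  have hv : vq q x = q * x / (1 - x + q * x) := rfl
  have h1v : 1 - vq q x = (1 - x) / (1 - x + q * x) := by
    rw [hv]; field_simp; ring
  have hQ : ∏ j ∈ Finset.range ((n - 1) - 1), (1 - vq q x + q ^ (j + 1) * vq q x)
      = (∏ j ∈ Finset.range (n - 2), (1 - x + q ^ (j + 2) * x)) / (1 - x + q * x) ^ (n - 2) := by
    have h2 : (n - 1) - 1 = n - 2 := by omega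
    rw [h2]
    calc ∏ j ∈ Finset.range (n - 2), (1 - vq q x + q ^ (j + 1) * vq q x)
        = ∏ j ∈ Finset.range (n - 2), ((1 - x + q ^ (j + 2) * x) / (1 - x + q * x)) := by
          refine Finset.prod_congr rfl fun j _ => ?_
          rw [hv]; field_simp; ring
      _ = (∏ j ∈ Finset.range (n - 2), (1 - x + q ^ (j + 2) * x)) / (1 - x + q * x) ^ (n - 2) := by
          rw [Finset.prod_div_distrib, Finset.prod_const, Finset.card_range]
  have hT : 0 < ∏ j ∈ Finset.range (n - 2), (1 - x + q ^ (j + 2) * x) :=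
    prod2_pos hq hx0 hx1 (n - 2)
  obtain ⟨d, hd⟩ : ∃ d, n = k + d + 1 := ⟨n - k - 1, by omega⟩
  subst hd
  unfold lupasB qBinom
  rw [prod_shift hn, hQ]
  cases d with
  | zero =>
    obtain ⟨k', rfl⟩ : ∃ k', k = k' + 1 := ⟨k - 1, by omega⟩
    have e1 : k' + 1 + 0 + 1 - (k' + 1) = 1 := by omega
    have e2 : k' + 1 + 0 + 1 - 1 = k' + 1 := by omega
    have e3 : k' + 1 + 0 + 1 - 1 - (k' + 1) = 0 := by omega
    have e3' : k' + 1 - (k' + 1) = 0 := by omega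
    have e4 : k' + 1 + 0 + 1 - 2 = k' := by omega
    simp only [e1, e2, e3, e3', e4]
    have f1 : qFact q (k' + 1 + 0 + 1) = qFact q (k' + 1) * qInt q (k' + 1 + 0 + 1) := rfl
    have f2 : qFact q 1 = 1 := by simp [qFact, qInt_one]
    have f3 : qFact q 0 = 1 := rfl
    rw [f1, f2, f3, h1v, hv, qInt_one]
    have n1 := (qFact_pos hq (k' + 1)).ne'
    have n2 := (qInt_pos hq (show 0 < k' + 1 + 0 + 1 by omega)).ne'
    have nT := (prod2_pos hq hx0 hx1 k').ne'
    generalize ∏ j ∈ Finset.range k', (1 - x + q ^ (j + 2) * x) = P at nT ⊢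
    generalize 1 - x + q * x = s at hs ⊢
    simp only [div_pow]
    field_simp [hs.ne', n1, n2, nT]
    ring
  | succ d =>
    have e1 : k + (d + 1) + 1 - k = d + 2 := by omega
    have e2 : k + (d + 1) + 1 - 1 = k + d + 1 := by omega
    have e3 : k + (d + 1) + 1 - 1 - k = d + 1 := by omega
    have e3' : k + d + 1 - k = d + 1 := by omega
    have e4 : k + (d + 1) + 1 - 2 = k + d := by omega
    simp only [e1, e2, e3, e3', e4]
    have f1 : qFact q (k + (d + 1) + 1) = qFact q (k + d + 1) * qInt q (k + (d + 1) + 1) := by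
      have h5 : k + (d + 1) + 1 = (k + d + 1) + 1 := by omega
      rw [h5]; rfl
    have f2 : qFact q (d + 2) = qFact q (d + 1) * qInt q (d + 2) := rfl
    rw [f1, f2, h1v, hv]
    have n1 := (qFact_pos hq (k + d + 1)).ne'
    have n2 := (qFact_pos hq k).ne'
    have n3 := (qFact_pos hq (d + 1)).ne'
    have n4 := (qInt_pos hq (show 0 < k + (d + 1) + 1 by omega)).ne'
    have n5 := (qInt_pos hq (show 0 < d + 2 by omega)).ne'
    have nT := (prod2_pos hq hx0 hx1 (k + d)).ne'
    generalize ∏ j ∈ Finset.range (k + d), (1 - x + q ^ (j + 2) * x) = P at nT ⊢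
    generalize 1 - x + q * x = s at hs ⊢
    simp only [div_pow]
    field_simp [hs.ne', n1, n2, n3, n4, n5, nT]
    ring

/-- Step A: recurrence for the finite Lupaş operator on monomials. -/
lemma stepA {q x : ℝ} (hq : 0 < q) (hx0 : 0 ≤ x) (hx1 : x ≤ 1) {n : ℕ} (hn : 2 ≤ n) (m : ℕ) :
    lupasR q n (fun t => t ^ (m + 1)) x
      = lupasR q n (fun t => t ^ m) x
        - (1 - x) * (qInt q (n - 1) / qInt q n) ^ m
          * lupasR q (n - 1) (fun t => t ^ m) (vq q x) := by
  have hIn : 0 < qInt q n := qInt_pos hq (by omega)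
  have hIn1 : 0 < qInt q (n - 1) := qInt_pos hq (by omega)
  unfold lupasR
  beta_reduce
  have hrange : (n - 1) + 1 = n := by omega
  rw [hrange]
  have hsplit : ∀ k ∈ Finset.range (n + 1),
      (qInt q k / qInt q n) ^ (m + 1) * lupasB q n k x
        = (qInt q k / qInt q n) ^ m * lupasB q n k x
          - (qInt q k / qInt q n) ^ m * (q ^ k * qInt q (n - k) / qInt q n)
            * lupasB q n k x := by
    intro k hk
    have hkn : k ≤ n := by
      have := Finset.mem_range.mp hk; omega
    have hadd : qInt q k / qInt q n + q ^ k * qInt q (n - k) / qInt q n = 1 := by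
      rw [← add_div, ← qInt_split hkn, div_self hIn.ne']
    linear_combination ((qInt q k / qInt q n) ^ m * lupasB q n k x) * hadd
  rw [Finset.sum_congr rfl hsplit, Finset.sum_sub_distrib]
  congr 1
  rw [Finset.sum_range_succ]
  have hlast : (qInt q n / qInt q n) ^ m * (q ^ n * qInt q (n - n) / qInt q n)
      * lupasB q n n x = 0 := by
    simp [qInt_zero]
  rw [hlast, add_zero, Finset.mul_sum]
  refine Finset.sum_congr rfl fun k hk => ?_
  have hkn1 : k ≤ n - 1 := by
    have := Finset.mem_range.mp hk; omega
  have hb := bterm hq hx0 hx1 hn hkn1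
  have hb' : (1 - x) * lupasB q (n - 1) k (vq q x)
      = q ^ k * qInt q (n - k) / qInt q n * lupasB q n k x := by
    rw [div_mul_eq_mul_div, eq_div_iff hIn.ne']
    linear_combination -hb
  have hpow : (qInt q (n - 1) / qInt q n) ^ m * (qInt q k / qInt q (n - 1)) ^ m
      = (qInt q k / qInt q n) ^ m := by
    rw [← mul_pow]
    congr 1
    field_simp [hIn.ne', hIn1.ne']
  calc (qInt q k / qInt q n) ^ m * (q ^ k * qInt q (n - k) / qInt q n) * lupasB q n k x
      = (qInt q k / qInt q n) ^ m
          * (q ^ k * qInt q (n - k) / qInt q n * lupasB q n k x) := by ring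
    _ = ((qInt q (n - 1) / qInt q n) ^ m * (qInt q k / qInt q (n - 1)) ^ m)
          * ((1 - x) * lupasB q (n - 1) k (vq q x)) := by rw [hpow, hb']
    _ = (1 - x) * (qInt q (n - 1) / qInt q n) ^ m
          * ((qInt q k / qInt q (n - 1)) ^ m * lupasB q (n - 1) k (vq q x)) := by ring

lemma multipliable_aux {q t : ℝ} (hq0 : 0 < q) (hq1 : q < 1) (ht : 0 ≤ t) :
    Multipliable (fun j : ℕ => 1 + q ^ j * t) := by
  have hpos : ∀ j : ℕ, (0:ℝ) < 1 + q ^ j * t := by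
    intro j
    have := pow_pos hq0 j
    nlinarith [mul_nonneg (pow_pos hq0 j).le ht]
  have hlog : Summable (fun j : ℕ => Real.log (1 + q ^ j * t)) := by
    refine Summable.of_nonneg_of_le (fun j => Real.log_nonneg ?_) (fun j => ?_)
      ((summable_geometric_of_lt_one hq0.le hq1).mul_right t)
    · nlinarith [mul_nonneg (pow_pos hq0 j).le ht]
    · have := Real.log_le_sub_one_of_pos (hpos j)
      linarith
  exact Real.multipliable_of_summable_log hpos hlog

lemma tprod_pos_aux {q t : ℝ} (hq0 : 0 < q) (hq1 : q < 1) (ht : 0 ≤ t) :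
    0 < ∏' j : ℕ, (1 + q ^ j * t) := by
  have hm := multipliable_aux hq0 hq1 ht
  have h1 : (1:ℝ) ≤ ∏' j : ℕ, (1 + q ^ j * t) := by
    refine ge_of_tendsto' hm.hasProd fun s => ?_
    calc (1:ℝ) = ∏ _j ∈ s, 1 := by rw [Finset.prod_const_one]
      _ ≤ ∏ j ∈ s, (1 + q ^ j * t) :=
          Finset.prod_le_prod (fun j _ => zero_le_one)
            (fun j _ => by nlinarith [mul_nonneg (pow_pos hq0 j).le ht])
  linarith

lemma bInf_nonneg {q x : ℝ} (hq0 : 0 < q) (hq1 : q < 1) (hx0 : 0 ≤ x) (hx1 : x < 1) (k : ℕ) :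
    0 ≤ lupasBInf q k x := by
  unfold lupasBInf
  have h1 : 0 ≤ x / (1 - x) := div_nonneg hx0 (by linarith)
  have h2 : 0 < (1 - q) ^ k * qFact q k * ∏' j : ℕ, (1 + q ^ j * (x / (1 - x))) :=
    mul_pos (mul_pos (pow_pos (by linarith) k) (qFact_pos hq0 k))
      (tprod_pos_aux hq0 hq1 h1)
  exact div_nonneg (mul_nonneg (pow_pos hq0 _).le (pow_nonneg h1 k)) h2.le

lemma bInf_succ {q x : ℝ} (hq0 : 0 < q) (hq1 : q < 1) (hx0 : 0 ≤ x) (hx1 : x < 1) (k : ℕ) :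
    lupasBInf q (k + 1) x
      = lupasBInf q k x * (q ^ k * (x / (1 - x)) / ((1 - q) * qInt q (k + 1))) := by
  unfold lupasBInf
  have htri : (k + 1) * (k + 1 - 1) / 2 = k * (k - 1) / 2 + k := Nat.triangle_succ k
  have f1 : qFact q (k + 1) = qFact q k * qInt q (k + 1) := rfl
  rw [htri, f1]
  have h1 : 0 ≤ x / (1 - x) := div_nonneg hx0 (by linarith)
  have n1 : (1 - q : ℝ) ≠ 0 := by linarith
  have n2 := (qFact_pos hq0 k).ne'
  have n3 := (qInt_pos hq0 k.succ_pos).ne'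
  have n4 := (tprod_pos_aux hq0 hq1 h1).ne'
  set T := x / (1 - x) with hTdef
  set P := ∏' j : ℕ, (1 + q ^ j * T) with hPdef
  rw [pow_add]
  field_simp
  ring

lemma summable_bInf {q x : ℝ} (hq0 : 0 < q) (hq1 : q < 1) (hx0 : 0 ≤ x) (hx1 : x < 1) :
    Summable (fun k : ℕ => lupasBInf q k x) := by
  have ht : 0 ≤ x / (1 - x) := div_nonneg hx0 (by linarith)
  apply summable_of_ratio_norm_eventually_le (r := 1 / 2) (by norm_num)
  have htend : Filter.Tendsto (fun k : ℕ => q ^ k * (x / (1 - x) / (1 - q)))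
      Filter.atTop (nhds 0) := by
    have h := tendsto_pow_atTop_nhds_zero_of_lt_one hq0.le hq1
    simpa using h.mul_const (x / (1 - x) / (1 - q))
  have hev := htend.eventually_le_const (show (0:ℝ) < 1 / 2 by norm_num)
  filter_upwards [hev] with k hk
  have hBk := bInf_nonneg hq0 hq1 hx0 hx1 k
  have hBk1 := bInf_nonneg hq0 hq1 hx0 hx1 (k + 1)
  rw [Real.norm_eq_abs, Real.norm_eq_abs, abs_of_nonneg hBk1, abs_of_nonneg hBk,
    bInf_succ hq0 hq1 hx0 hx1 k]
  have hI : 1 ≤ qInt q (k + 1) := one_le_qInt hq0 k.succ_pos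
  have h2 : q ^ k * (x / (1 - x)) / ((1 - q) * qInt q (k + 1))
      ≤ q ^ k * (x / (1 - x) / (1 - q)) := by
    rw [← div_div, mul_div_assoc]
    refine div_le_self ?_ hI
    have : (0:ℝ) < 1 - q := by linarith
    positivity
  calc lupasBInf q k x * (q ^ k * (x / (1 - x)) / ((1 - q) * qInt q (k + 1)))
      ≤ lupasBInf q k x * (q ^ k * (x / (1 - x) / (1 - q))) :=
        mul_le_mul_of_nonneg_left h2 hBk
    _ ≤ lupasBInf q k x * (1 / 2) := mul_le_mul_of_nonneg_left hk hBk
    _ = 1 / 2 * lupasBInf q k x := mul_comm _ _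

lemma bInf_v {q x : ℝ} (hq0 : 0 < q) (hq1 : q < 1) (hx0 : 0 ≤ x) (hx1 : x < 1) (k : ℕ) :
    (1 - x) * lupasBInf q k (vq q x) = q ^ k * lupasBInf q k x := by
  have hs : 0 < 1 - x + q * x := s_pos hq0 hx0 hx1.le
  have hx1' : (0:ℝ) < 1 - x := by linarith
  have hvv : vq q x / (1 - vq q x) = q * (x / (1 - x)) := by
    unfold vq
    field_simp
    rw [show 1 - x + q * x - q * x = 1 - x by ring]
    field_simp [hx1'.ne']
  have ht : 0 ≤ x / (1 - x) := div_nonneg hx0 hx1'.le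
  have hqt : 0 ≤ q * (x / (1 - x)) := mul_nonneg hq0.le ht
  have hm1 : Multipliable (fun j : ℕ => 1 + q ^ (j + 1) * (x / (1 - x))) := by
    have h := multipliable_aux hq0 hq1 hqt
    have he : (fun j : ℕ => 1 + q ^ j * (q * (x / (1 - x))))
        = fun j : ℕ => 1 + q ^ (j + 1) * (x / (1 - x)) := by
      funext j; ring
    rwa [he] at h
  have h0 : ∏' j : ℕ, (1 + q ^ j * (x / (1 - x)))
      = (1 + q ^ 0 * (x / (1 - x))) * ∏' j : ℕ, (1 + q ^ (j + 1) * (x / (1 - x))) :=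
    tprod_eq_zero_mul' hm1
  have hone : (1:ℝ) + q ^ 0 * (x / (1 - x)) = 1 / (1 - x) := by
    rw [pow_zero, one_mul]
    field_simp
    ring
  have hshift : ∏' j : ℕ, (1 + q ^ j * (q * (x / (1 - x))))
      = (1 - x) * ∏' j : ℕ, (1 + q ^ j * (x / (1 - x))) := by
    calc ∏' j : ℕ, (1 + q ^ j * (q * (x / (1 - x))))
        = ∏' j : ℕ, (1 + q ^ (j + 1) * (x / (1 - x))) := tprod_congr fun j => by ring
      _ = (1 - x) * ∏' j : ℕ, (1 + q ^ j * (x / (1 - x))) := by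
          rw [h0, hone]
          field_simp
          congr 1
          funext j
          ring
  unfold lupasBInf
  rw [hvv, hshift]
  have n1 : (1 - q : ℝ) ≠ 0 := by linarith
  have n2 := (qFact_pos hq0 k).ne'
  have n4 := (tprod_pos_aux hq0 hq1 ht).ne'
  set T := x / (1 - x) with hTdef
  set P := ∏' j : ℕ, (1 + q ^ j * T) with hPdef
  rw [mul_pow]
  field_simp

/-- Step B: recurrence for the limit Lupaş operator on monomials. -/
lemma stepB {q x : ℝ} (hq0 : 0 < q) (hq1 : q < 1) (hx0 : 0 ≤ x) (hx1 : x ≤ 1) (m : ℕ) :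
    lupasRInf q (fun t => t ^ (m + 1)) x
      = lupasRInf q (fun t => t ^ m) x - (1 - x) * lupasRInf q (fun t => t ^ m) (vq q x) := by
  have hnq : ¬ (1 < q) := by linarith
  unfold lupasRInf
  rw [if_neg hnq, if_neg hnq, if_neg hnq]
  rcases eq_or_lt_of_le hx1 with h1 | hxlt
  · subst h1
    have hv1 : vq q 1 = 1 := by
      unfold vq
      rw [mul_one]
      norm_num [hq0.ne']
    rw [hv1]
    unfold lupasRInfLow
    simp
  · have hs : 0 < 1 - x + q * x := s_pos hq0 hx0 hx1
    have hvlt : vq q x < 1 := by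
      unfold vq
      rw [div_lt_one hs]
      linarith
    unfold lupasRInfLow
    simp only [if_neg hxlt.ne, if_neg hvlt.ne]
    have hBnn : ∀ k, 0 ≤ lupasBInf q k x := bInf_nonneg hq0 hq1 hx0 hxlt
    have hsum := summable_bInf hq0 hq1 hx0 hxlt
    have hqk : ∀ k : ℕ, 0 ≤ 1 - q ^ k := by
      intro k
      have := pow_le_one₀ hq0.le hq1.le (n := k)
      linarith
    have hS1 : Summable (fun k : ℕ => (1 - q ^ k) ^ m * lupasBInf q k x) := by
      refine Summable.of_nonneg_of_le
        (fun k => mul_nonneg (pow_nonneg (hqk k) m) (hBnn k)) (fun k => ?_) hsum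
      exact mul_le_of_le_one_left (hBnn k)
        (pow_le_one₀ (hqk k) (by nlinarith [pow_pos hq0 k]))
    have hS2 : Summable (fun k : ℕ => (1 - q ^ k) ^ m * (q ^ k * lupasBInf q k x)) := by
      refine Summable.of_nonneg_of_le
        (fun k => mul_nonneg (pow_nonneg (hqk k) m)
          (mul_nonneg (pow_pos hq0 k).le (hBnn k))) (fun k => ?_) hsum
      calc (1 - q ^ k) ^ m * (q ^ k * lupasBInf q k x)
          ≤ 1 * (q ^ k * lupasBInf q k x) := by
            refine mul_le_mul_of_nonneg_right
              (pow_le_one₀ (hqk k) (by nlinarith [pow_pos hq0 k]))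
              (mul_nonneg (pow_pos hq0 k).le (hBnn k))
        _ = q ^ k * lupasBInf q k x := one_mul _
        _ ≤ 1 * lupasBInf q k x :=
            mul_le_mul_of_nonneg_right (pow_le_one₀ hq0.le hq1.le) (hBnn k)
        _ = lupasBInf q k x := one_mul _
    have h1x : (1 - x) * ∑' k : ℕ, (1 - q ^ k) ^ m * lupasBInf q k (vq q x)
        = ∑' k : ℕ, (1 - q ^ k) ^ m * (q ^ k * lupasBInf q k x) := by
      rw [← tsum_mul_left]
      refine tsum_congr fun k => ?_
      have hbv := bInf_v hq0 hq1 hx0 hxlt k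
      linear_combination (1 - q ^ k) ^ m * hbv
    rw [h1x, ← Summable.tsum_sub hS1 hS2]
    refine tsum_congr fun k => ?_
    rw [pow_succ]
    ring


end LupasAux
theorem lupasL_recurrence (q : ℝ) (hq0 : 0 < q) (hq1 : q < 1) (n : ℕ) (hn : 2 ≤ n) (m : ℕ)
    (x : ℝ) (hx : x ∈ Set.Icc (0:ℝ) 1) :
    lupasL q n (fun t => t ^ (m + 1)) x =
      lupasL q n (fun t => t ^ m) x +
        (1 - x) * ((1 - (qInt q (n - 1) / qInt q n) ^ m) *
            lupasRInf q (fun t => t ^ m) (vq q x) -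
          (qInt q (n - 1) / qInt q n) ^ m * lupasL q (n - 1) (fun t => t ^ m) (vq q x)) := by
  obtain ⟨hx0, hx1⟩ := hx
  unfold lupasL
  rw [stepA hq0 hx0 hx1 hn m, stepB hq0 hq1 hx0 hx1 m]
  ring
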